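/- Let X be the space of finitely supported scalar sequences with the supremum norm and T = 2·Id. Then T does not have the positive shadowing property: for every δ > 0 the δ-pseudotrajectory x^{(0)} = 0, x^{(j)} = (2^{j−1}δ, 2^{j−2}δ, …, 2δ, δ, 0, 0, …) cannot be 1-shadowed by any trajectory of T. -/

import Mathlib

/-- The sup norm of a scalar sequence. -/
noncomputable def supNorm (g : ℕ → ℝ) : ℝ := ⨆ n, |g n|

lemma supNorm_le {g : ℕ → ℝ} {c : ℝ} (h : ∀ n, |g n| ≤ c) : supNorm g ≤ c :=
  ciSup_le h

lemma le_supNorm {g : ℕ → ℝ} (hg : (Function.support g).Finite) (n : ℕ) :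
    |g n| ≤ supNorm g := by
  rw [supNorm]
  have hr : (Set.range fun m => |g m|).Finite := by
    apply Set.Finite.subset (((hg.image g).image abs).insert 0)
    rintro y ⟨m, rfl⟩
    by_cases h : g m = 0
    · simp [h]
    · exact Set.mem_insert_iff.2 (Or.inr ⟨g m, ⟨m, h, rfl⟩, rfl⟩)
  exact le_ciSup hr.bddAbove n

/-- On the space of finitely supported sequences with the sup norm, T = 2·Id does not have the
positive shadowing property: for every δ > 0 the displayed δ-pseudotrajectory is finitely
supported, is a δ-pseudotrajectory, and cannot be 1-shadowed by any finitely supported point. -/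
theorem stmt4 (δ : ℝ) (hδ : 0 < δ) :
    (∀ j : ℕ,
      (Function.support (fun n : ℕ => if n < j then (2 : ℝ) ^ (j - 1 - n) * δ else 0)).Finite) ∧
    (∀ j : ℕ, supNorm (fun n : ℕ =>
        2 * (if n < j then (2 : ℝ) ^ (j - 1 - n) * δ else 0) -
          (if n < j + 1 then (2 : ℝ) ^ (j + 1 - 1 - n) * δ else 0)) ≤ δ) ∧
    ¬ ∃ x : ℕ → ℝ, (Function.support x).Finite ∧
        ∀ j : ℕ, supNorm (fun n : ℕ =>
          (if n < j then (2 : ℝ) ^ (j - 1 - n) * δ else 0) - 2 ^ j * x n) < 1 := by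
  refine ⟨?_, ?_, ?_⟩
  · intro j
    apply Set.Finite.subset (Set.finite_Iio j)
    intro n hn
    simp only [Function.mem_support] at hn
    by_contra h
    exact hn (if_neg h)
  · intro j
    apply supNorm_le
    intro n
    rcases lt_trichotomy n j with h | h | h
    · have h' : n < j + 1 := by omega
      have hp : (2 : ℝ) ^ (j + 1 - 1 - n) = 2 * 2 ^ (j - 1 - n) := by
        have : j + 1 - 1 - n = (j - 1 - n) + 1 := by omega
        rw [this, pow_succ]; ring
      simp only [if_pos h, if_pos h', hp]
      rw [show 2 * (2 ^ (j - 1 - n) * δ) - 2 * 2 ^ (j - 1 - n) * δ = 0 by ring]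
      simp [hδ.le]
    · subst h
      norm_num [abs_of_pos hδ]
    · have h1 : ¬ n < j := by omega
      have h2 : ¬ n < j + 1 := by omega
      simp [h1, h2, hδ.le]
  · rintro ⟨x, hx, h⟩
    obtain ⟨n, hn⟩ := (hx.infinite_compl).nonempty
    have hxn : x n = 0 := by simpa [Function.mem_support] using hn
    obtain ⟨k, hk⟩ := pow_unbounded_of_one_lt (R := ℝ) (1 / δ) one_lt_two
    have h1 : (1 : ℝ) < 2 ^ k * δ := by
      rw [div_lt_iff₀ hδ] at hk
      linarith
    set j := n + 1 + k with hj
    have hnj : n < j := by omega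
    have hjn : j - 1 - n = k := by omega
    set g : ℕ → ℝ := fun m => (if m < j then (2 : ℝ) ^ (j - 1 - m) * δ else 0) - 2 ^ j * x m
      with hg
    have hgfin : (Function.support g).Finite := by
      apply Set.Finite.subset ((Set.finite_Iio j).union hx)
      intro m hm
      simp only [Function.mem_support, hg] at hm
      by_cases h1 : m < j
      · exact Or.inl h1
      · right
        simp only [if_neg h1, zero_sub, neg_ne_zero] at hm
        intro hx0
        exact hm (by simp [hx0])
    have := le_supNorm hgfin n
    have h2 : g n = 2 ^ k * δ := by
      simp [hg, if_pos hnj, hjn, hxn]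
    rw [h2] at this
    have h3 := h j
    have : (1:ℝ) < supNorm g := lt_of_lt_of_le h1 (by
      calc (2:ℝ) ^ k * δ = |2 ^ k * δ| := by
            rw [abs_of_pos (by positivity)]
        _ ≤ supNorm g := this)
    exact absurd h3 (by simp only [not_lt]; exact this.le.trans (le_of_eq rfl))
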